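/- (Lemma 1) Let μ and ν be probability measures on ℝ, with μ having finite variance σ_E², and let λ and γ be their characteristic functions. Suppose that for all x ∈ (0, π) and the given ω > 0 the characteristic-function uncertainty relation |γ(ω)|² + |λ(x/ω)|² ≤ β(x) holds, where β(x) = 2√2 (√2 − √(1 − cos x)) / (1 + cos x). Then σ_E ≥ ω |γ(ω)| / π. -/

import Mathlib

open MeasureTheory Real

/-- The bound function of the characteristic-function uncertainty relation of Rudnicki (2016). -/
noncomputable def rudnickiBeta (x : ℝ) : ℝ :=
  2 * Real.sqrt 2 * (Real.sqrt 2 - Real.sqrt (1 - Real.cos x)) / (1 + Real.cos x)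

/-- The characteristic function of a measure on `ℝ`. -/
noncomputable def charFunction (μ : Measure ℝ) (ω : ℝ) : ℂ :=
  ∫ E, Complex.exp (Complex.I * ω * E) ∂μ

lemma aux_integrable_exp (μ : Measure ℝ) [IsProbabilityMeasure μ] (f : ℝ → ℝ)
    (hf : Continuous f) : Integrable (fun E => Complex.exp ((f E : ℂ) * Complex.I)) μ := by
  refine (integrable_const (1:ℝ)).mono' ?_ ?_
  · exact (Complex.continuous_exp.comp (by continuity)).aestronglyMeasurable
  · filter_upwards with E
    rw [Complex.norm_exp_ofReal_mul_I]

lemma aux_norm_charFun_le_one (μ : Measure ℝ) [IsProbabilityMeasure μ] (t : ℝ) :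
    ‖charFunction μ t‖ ≤ 1 := by
  calc ‖∫ E, Complex.exp (Complex.I * t * E) ∂μ‖ ≤ ∫ E, ‖Complex.exp (Complex.I * t * E)‖ ∂μ :=
        norm_integral_le_integral_norm _
    _ = ∫ E, (1:ℝ) ∂μ := by
        refine integral_congr_ae (ae_of_all _ fun E => ?_)
        have h : Complex.I * t * E = ((t * E : ℝ) : ℂ) * Complex.I := by push_cast; ring
        simp only [h, Complex.norm_exp_ofReal_mul_I]
    _ = 1 := by simp

lemma aux_charFun_lower (μ : Measure ℝ) [IsProbabilityMeasure μ]
    (h2 : Integrable (fun E => E ^ 2) μ) (t : ℝ) :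
    1 - t ^ 2 * (∫ E, (E - ∫ x, x ∂μ) ^ 2 ∂μ) / 2 ≤ ‖charFunction μ t‖ := by
  set m := ∫ x, x ∂μ with hm
  have hE : Integrable (fun E => E) μ := by
    refine (h2.add (integrable_const 1)).mono' aestronglyMeasurable_id ?_
    filter_upwards with E
    simp only [id_eq, Pi.add_apply, Real.norm_eq_abs]
    nlinarith [sq_nonneg (|E| - 1), sq_abs E]
  have hsq : Integrable (fun E => (E - m) ^ 2) μ := by
    have h : (fun E => (E - m) ^ 2) = fun E => E ^ 2 - (2 * m) * E + m ^ 2 := by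
      funext E; ring
    rw [h]
    exact (h2.sub (hE.const_mul (2 * m))).add (integrable_const _)
  have hcos : Integrable (fun E => Real.cos (t * (E - m))) μ := by
    refine (integrable_const (1:ℝ)).mono' ?_ ?_
    · exact (Real.continuous_cos.comp (by continuity)).aestronglyMeasurable
    · filter_upwards with E
      simp [Real.abs_cos_le_one]
  have hexp : Integrable (fun E => Complex.exp ((↑(t * (E - m)) : ℂ) * Complex.I)) μ :=
    aux_integrable_exp μ (fun E => t * (E - m)) (by continuity)
  have hrw : ∫ E, Complex.exp (Complex.I * t * E) ∂μ
      = Complex.exp ((↑(t * m) : ℂ) * Complex.I)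
        * ∫ E, Complex.exp ((↑(t * (E - m)) : ℂ) * Complex.I) ∂μ := by
    rw [← integral_const_mul]
    refine integral_congr_ae (ae_of_all _ fun E => ?_)
    show Complex.exp (Complex.I * ↑t * ↑E)
        = Complex.exp ((↑(t * m) : ℂ) * Complex.I) * Complex.exp ((↑(t * (E - m)) : ℂ) * Complex.I)
    rw [← Complex.exp_add]
    congr 1
    push_cast
    ring
  have hnorm : ‖∫ E, Complex.exp (Complex.I * t * E) ∂μ‖
      = ‖∫ E, Complex.exp ((↑(t * (E - m)) : ℂ) * Complex.I) ∂μ‖ := by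
    rw [hrw, norm_mul, Complex.norm_exp_ofReal_mul_I, one_mul]
  rw [charFunction, hnorm]
  have hre : (∫ E, Complex.exp ((↑(t * (E - m)) : ℂ) * Complex.I) ∂μ).re
      ≤ ‖∫ E, Complex.exp ((↑(t * (E - m)) : ℂ) * Complex.I) ∂μ‖ := by
    exact Complex.re_le_norm _
  refine le_trans ?_ hre
  rw [← RCLike.re_to_complex, ← integral_re hexp]
  have hre2 : ∀ E : ℝ, (Complex.exp ((↑(t * (E - m)) : ℂ) * Complex.I)).re
      = Real.cos (t * (E - m)) := fun E => Complex.exp_ofReal_mul_I_re _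
  calc 1 - t ^ 2 * (∫ E, (E - m) ^ 2 ∂μ) / 2
      = ∫ E, (1 - t ^ 2 * (E - m) ^ 2 / 2) ∂μ := by
        rw [integral_sub (integrable_const 1) (by
          have h : (fun E => t ^ 2 * (E - m) ^ 2 / 2) = fun E => (t ^ 2 / 2) * (E - m) ^ 2 := by
            funext E; ring
          rw [h]; exact hsq.const_mul _)]
        have h : ∫ E, t ^ 2 * (E - m) ^ 2 / 2 ∂μ = (t ^ 2 / 2) * ∫ E, (E - m) ^ 2 ∂μ := by
          rw [← integral_const_mul]
          congr 1; funext E; ring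
        rw [h]
        simp
        ring
    _ ≤ ∫ E, Real.cos (t * (E - m)) ∂μ := by
        refine integral_mono (by
          have h : (fun E => 1 - t ^ 2 * (E - m) ^ 2 / 2)
              = fun E => (1:ℝ) - (t ^ 2 / 2) * (E - m) ^ 2 := by funext E; ring
          rw [h]; exact (integrable_const 1).sub (hsq.const_mul _)) hcos fun E => ?_
        have := Real.one_sub_sq_div_two_le_cos (x := t * (E - m))
        nlinarith [this]
    _ = ∫ E, RCLike.re (Complex.exp ((↑(t * (E - m)) : ℂ) * Complex.I)) ∂μ := by
        refine integral_congr_ae (ae_of_all _ fun E => ?_)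
        show Real.cos (t * (E - m)) = RCLike.re (Complex.exp ((↑(t * (E - m)) : ℂ) * Complex.I))
        rw [RCLike.re_to_complex, hre2]

lemma aux_beta_le {x : ℝ} (hx : x ∈ Set.Ioo (0 : ℝ) π) :
    rudnickiBeta x ≤ 1 + (π - x) ^ 2 / 8 := by
  obtain ⟨hx0, hxπ⟩ := hx
  set s := Real.sqrt (1 - Real.cos x) with hs
  have hcos_lt : Real.cos x < 1 := by
    have := Real.cos_lt_cos_of_nonneg_of_le_pi (le_refl 0) hxπ.le hx0
    simpa using this
  have hcos_gt : -1 < Real.cos x := by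
    have := Real.cos_lt_cos_of_nonneg_of_le_pi hx0.le (le_refl π) hxπ
    simpa using this
  have hs0 : 0 ≤ s := Real.sqrt_nonneg _
  have hs2 : s ^ 2 = 1 - Real.cos x := Real.sq_sqrt (by linarith)
  have h22 : Real.sqrt 2 ^ 2 = 2 := Real.sq_sqrt (by norm_num)
  have h2pos : (0:ℝ) < Real.sqrt 2 := Real.sqrt_pos.mpr (by norm_num)
  have hs_lt : s < Real.sqrt 2 := by nlinarith
  have hfac : 1 + Real.cos x = (Real.sqrt 2 - s) * (Real.sqrt 2 + s) := by nlinarith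
  have hβ : rudnickiBeta x = 2 * Real.sqrt 2 / (Real.sqrt 2 + s) := by
    rw [rudnickiBeta, hfac, show 2 * Real.sqrt 2 * (Real.sqrt 2 - s)
        = (Real.sqrt 2 - s) * (2 * Real.sqrt 2) by ring,
      mul_div_mul_left _ _ (by linarith : Real.sqrt 2 - s ≠ 0)]
  have hsin_nonneg : 0 ≤ Real.sin (x / 2) :=
    Real.sin_nonneg_of_nonneg_of_le_pi (by linarith) (by linarith [Real.pi_pos])
  have hsin : s = Real.sqrt 2 * Real.sin (x / 2) := by
    have h1 : 1 - Real.cos x = 2 * Real.sin (x / 2) ^ 2 := by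
      have := Real.sin_sq_eq_half_sub (x / 2)
      rw [show 2 * (x / 2) = x by ring] at this
      linarith
    rw [hs, h1, Real.sqrt_mul (by norm_num), Real.sqrt_sq hsin_nonneg]
  have hsin_ge : 1 - (π - x) ^ 2 / 8 ≤ Real.sin (x / 2) := by
    have h1 : Real.sin (x / 2) = Real.cos (π / 2 - x / 2) := (Real.cos_pi_div_two_sub _).symm
    have h2 := Real.one_sub_sq_div_two_le_cos (x := π / 2 - x / 2)
    rw [h1]
    nlinarith
  rw [hβ]
  have hden : 0 < Real.sqrt 2 + s := by linarith
  rw [div_le_iff₀ hden]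
  nlinarith [mul_nonneg hs0 (by linarith : (0:ℝ) ≤ Real.sqrt 2 - s),
    mul_le_mul_of_nonneg_left hsin_ge (le_of_lt h2pos)]

/-- Lemma 1: If the characteristic-function uncertainty relation
`|γ(ω)|² + |λ(x/ω)|² ≤ β(x)` holds for all `x ∈ (0, π)` at a given `ω > 0`, then the
energy dispersion satisfies `σ_E ≥ ω |γ(ω)| / π`. -/
theorem stmt_5 (μ ν : Measure ℝ) [IsProbabilityMeasure μ] [IsProbabilityMeasure ν]
    (h2 : Integrable (fun E => E ^ 2) μ)
    (ω : ℝ) (hω : 0 < ω)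
    (hChUR : ∀ x ∈ Set.Ioo (0 : ℝ) π,
      ‖charFunction ν ω‖ ^ 2 + ‖charFunction μ (x / ω)‖ ^ 2 ≤ rudnickiBeta x) :
    ω * ‖charFunction ν ω‖ / π
      ≤ Real.sqrt ((∫ E, E ^ 2 ∂μ) - (∫ E, E ∂μ) ^ 2) := by
  have hπ : (0:ℝ) < π := Real.pi_pos
  set c := ‖charFunction ν ω‖ with hc
  set m := ∫ E, E ∂μ with hm
  set V := ∫ E, (E - m) ^ 2 ∂μ with hV
  have hc0 : 0 ≤ c := norm_nonneg _
  have hc1 : c ≤ 1 := aux_norm_charFun_le_one ν ω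
  have hV0 : 0 ≤ V := integral_nonneg fun E => sq_nonneg _
  -- integrability of identity
  have hE : Integrable (fun E => E) μ := by
    refine (h2.add (integrable_const 1)).mono' aestronglyMeasurable_id ?_
    filter_upwards with E
    simp only [id_eq, Pi.add_apply, Real.norm_eq_abs]
    nlinarith [sq_nonneg (|E| - 1), sq_abs E]
  -- V = ∫E² - m²
  have hVeq : V = (∫ E, E ^ 2 ∂μ) - m ^ 2 := by
    have h : (fun E => (E - m) ^ 2) = fun E => E ^ 2 - (2 * m) * E + m ^ 2 := by
      funext E; ring
    have hint1 : Integrable (fun E => E ^ 2 - 2 * m * E) μ := h2.sub (hE.const_mul (2 * m))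
    rw [hV, h, integral_add hint1 (integrable_const _),
      integral_sub h2 (hE.const_mul (2 * m)), integral_const_mul, integral_const]
    simp [← hm]
    ring
  -- key step for each x
  have step : ∀ x ∈ Set.Ioo (0 : ℝ) π, c ^ 2 ≤ (π - x) ^ 2 / 8 + π ^ 2 * V / ω ^ 2 := by
    intro x hx
    obtain ⟨hx0, hxπ⟩ := hx
    have hω2 : (0:ℝ) < ω ^ 2 := by positivity
    have hxw : (x / ω) ^ 2 * V ≤ π ^ 2 * V / ω ^ 2 := by
      rw [div_pow, div_mul_eq_mul_div]
      have hxV : x ^ 2 * V ≤ π ^ 2 * V :=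
        mul_le_mul_of_nonneg_right (by nlinarith) hV0
      exact (div_le_div_iff_of_pos_right hω2).mpr hxV
    have hlam := aux_charFun_lower μ h2 (x / ω)
    rw [← hm, ← hV] at hlam
    have hUR := hChUR x ⟨hx0, hxπ⟩
    have hβ := aux_beta_le ⟨hx0, hxπ⟩
    obtain ⟨L, hL⟩ : ∃ L : ℝ, L = 1 - (x / ω) ^ 2 * V / 2 := ⟨_, rfl⟩
    rw [← hL] at hlam
    by_cases hLpos : 0 < L
    · have hlam2 : L ^ 2 ≤ ‖charFunction μ (x / ω)‖ ^ 2 :=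
        pow_le_pow_left₀ hLpos.le hlam 2
      have h1L : 1 - L = (x / ω) ^ 2 * V / 2 := by rw [hL]; ring
      have e1 : c ^ 2 ≤ 1 + (π - x) ^ 2 / 8 - L ^ 2 := by linarith
      have e2 : 1 - L ^ 2 ≤ 2 * (1 - L) := by nlinarith [sq_nonneg (1 - L)]
      have e3 : 2 * (1 - L) ≤ π ^ 2 * V / ω ^ 2 := by rw [h1L]; linarith
      linarith
    · push_neg at hLpos
      have h2le : (2:ℝ) ≤ (x / ω) ^ 2 * V := by
        rw [hL] at hLpos; linarith
      have h2le' : (2:ℝ) ≤ π ^ 2 * V / ω ^ 2 := le_trans h2le hxw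
      nlinarith [hc1, hc0, sq_nonneg (π - x)]
  -- pass to the limit x → π
  have key : c ^ 2 ≤ π ^ 2 * V / ω ^ 2 := by
    refine le_of_forall_pos_le_add fun ε hε => ?_
    set δ := min (Real.sqrt (8 * ε)) (π / 2) with hδ
    have hδ0 : 0 < δ := lt_min (Real.sqrt_pos.mpr (by linarith)) (by linarith)
    have hδπ : δ < π := lt_of_le_of_lt (min_le_right _ _) (by linarith)
    have hstep := step (π - δ) ⟨by linarith, by linarith⟩
    have hδ2 : δ ^ 2 ≤ 8 * ε := by
      have h1 : δ ≤ Real.sqrt (8 * ε) := min_le_left _ _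
      nlinarith [Real.sq_sqrt (by linarith : (0:ℝ) ≤ 8 * ε), Real.sqrt_nonneg (8 * ε)]
    rw [show π - (π - δ) = δ from by ring] at hstep
    linarith
  -- conclude
  rw [← hVeq]
  refine Real.le_sqrt_of_sq_le ?_
  have hω2 : (0:ℝ) < ω ^ 2 := by positivity
  have h1 : c ^ 2 * ω ^ 2 ≤ π ^ 2 * V := by
    rw [le_div_iff₀ hω2] at key; linarith
  rw [div_pow, mul_pow, div_le_iff₀ (by positivity : (0:ℝ) < π ^ 2)]
  nlinarith [h1]
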